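/- In the Hoffman bound setting, if equality α(X) = v(−τ)/(k−τ) holds, then every vertex not in a maximum coclique C of size α(X) has exactly −τ neighbors in C. -/

import Mathlib

open Matrix
open scoped Pointwise

/-- Equality case of the Hoffman bound: if a maximum coclique `C` attains the bound
`|C| = v·(−τ)/(k−τ)`, then every vertex not in `C` has exactly `−τ` neighbours in `C`. -/
theorem hoffman_bound_equality {V : Type*} [Fintype V] [DecidableEq V]
    (G : SimpleGraph V) [DecidableRel G.Adj]
    (k : ℕ) (hk : 0 < k) (hreg : G.IsRegularOfDegree k)
    (τ : ℝ) (hτmem : τ ∈ spectrum ℝ (G.adjMatrix ℝ))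
    (hτmin : ∀ x ∈ spectrum ℝ (G.adjMatrix ℝ), τ ≤ x) (hτneg : τ < 0)
    (C : Finset V) (hC : ∀ x ∈ C, ∀ y ∈ C, x ≠ y → ¬ G.Adj x y)
    (hCmax : ∀ S : Finset V, (∀ x ∈ S, ∀ y ∈ S, x ≠ y → ¬ G.Adj x y) → S.card ≤ C.card)
    (heq : (C.card : ℝ) = (Fintype.card V : ℝ) * (-τ) / ((k : ℝ) - τ)) :
    ∀ x ∉ C, ((C.filter (fun y => G.Adj x y)).card : ℝ) = -τ := by
  intro x hx
  have : Nonempty V := ⟨x⟩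
  set n : ℝ := (Fintype.card V : ℝ) with hn
  set α : ℝ := (C.card : ℝ) with hα
  have hnpos : 0 < n := by
    have h := Fintype.card_pos (α := V)
    rw [hn]
    exact_mod_cast h
  have hn0 : n ≠ 0 := ne_of_gt hnpos
  have hkτ : (0:ℝ) < (k:ℝ) - τ := by
    have : (0:ℝ) < (k:ℝ) := by exact_mod_cast hk
    linarith
  have hkτ0 : ((k:ℝ) - τ) ≠ 0 := ne_of_gt hkτ
  have hkey : α * ((k:ℝ) - τ) = n * (-τ) := by
    rw [heq]; field_simp
  set c : ℝ := α / n with hc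
  set z : V → ℝ := fun u => (if u ∈ C then (1:ℝ) else 0) - c with hz
  set A : Matrix V V ℝ := G.adjMatrix ℝ with hA
  set d : V → ℝ := fun u => ((C.filter (fun y => G.Adj u y)).card : ℝ) with hd
  -- the matrix A - τ·1
  set M : Matrix V V ℝ := A - algebraMap ℝ (Matrix V V ℝ) τ with hM
  -- pointwise value of A *ᵥ z
  have hfilter : ∀ u : V, (G.neighborFinset u).filter (· ∈ C)
      = C.filter (fun y => G.Adj u y) := by
    intro u
    ext w
    simp [SimpleGraph.mem_neighborFinset, and_comm]
  have hAz : ∀ u : V, (A *ᵥ z) u = d u - c * k := by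
    intro u
    rw [hA, SimpleGraph.adjMatrix_mulVec_apply]
    have : ∑ w ∈ G.neighborFinset u, z w
        = (∑ w ∈ G.neighborFinset u, (if w ∈ C then (1:ℝ) else 0))
          - (G.neighborFinset u).card • c := by
      rw [Finset.sum_sub_distrib, Finset.sum_const]
    rw [this, Finset.sum_boole, hfilter u]
    have hcard : (G.neighborFinset u).card = k := by
      rw [G.card_neighborFinset_eq_degree]; exact hreg u
    rw [hcard]
    simp [hd, mul_comm]
  -- sum of z is zero
  have hsum_z : ∑ u, z u = 0 := by
    simp only [hz, Finset.sum_sub_distrib, Finset.sum_boole, Finset.sum_const,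
      nsmul_eq_mul]
    have h1 : (Finset.univ.filter (· ∈ C)) = C := by
      ext w; simp
    rw [h1]
    rw [hc]
    field_simp
    rw [Finset.card_univ, ← hn, ← hα]; ring
  -- sum of d is k * α
  have hsum_d : ∑ u, d u = (k:ℝ) * α := by
    have : ∀ u : V, d u = ∑ y ∈ C, (if G.Adj u y then (1:ℝ) else 0) := by
      intro u; rw [hd]; simp [Finset.sum_boole]
    simp only [this]
    rw [Finset.sum_comm]
    have : ∀ y ∈ C, (∑ u : V, if G.Adj u y then (1:ℝ) else 0) = (k:ℝ) := by
      intro y _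
      rw [Finset.sum_boole]
      have : (Finset.univ.filter fun u => G.Adj u y) = G.neighborFinset y := by
        ext w; simp [SimpleGraph.mem_neighborFinset, G.adj_comm]
      rw [this]
      have : (G.neighborFinset y).card = k := by
        rw [G.card_neighborFinset_eq_degree]; exact hreg y
      exact_mod_cast congrArg Nat.cast this
    rw [Finset.sum_congr rfl this, Finset.sum_const, nsmul_eq_mul, ← hα, mul_comm]
  -- d vanishes on C
  have hdC : ∀ u ∈ C, d u = 0 := by
    intro u hu
    have : C.filter (fun y => G.Adj u y) = ∅ := by
      rw [Finset.filter_eq_empty_iff]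
      intro y hy hadj
      exact hC u hu y hy (G.ne_of_adj hadj) hadj
    simp [hd, this]
  have hsum_zd : ∑ u, z u * d u = -c * ((k:ℝ) * α) := by
    have : ∀ u : V, z u * d u = (if u ∈ C then d u else 0) - c * d u := by
      intro u
      by_cases h : u ∈ C <;> simp [hz, h, sub_mul]
    simp only [this, Finset.sum_sub_distrib]
    rw [← Finset.mul_sum, hsum_d]
    rw [Finset.sum_ite_mem, Finset.univ_inter]
    rw [Finset.sum_congr rfl hdC]
    simp
  have hsum_zsq : ∑ u, z u * z u = α - 2*c*α + n*c^2 := by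
    have : ∀ u : V, z u * z u
        = ((if u ∈ C then (1:ℝ) else 0) - 2*c*(if u ∈ C then (1:ℝ) else 0)) + c^2 := by
      intro u
      by_cases h : u ∈ C <;> simp [hz, h] <;> ring
    simp only [this]
    rw [Finset.sum_add_distrib, Finset.sum_sub_distrib, ← Finset.mul_sum,
      Finset.sum_boole, Finset.sum_const, nsmul_eq_mul]
    have h1 : (Finset.univ.filter (· ∈ C)) = C := by ext w; simp
    rw [h1, Finset.card_univ, ← hn]
  -- the quadratic form vanishes
  have hQ : star z ⬝ᵥ (M *ᵥ z) = 0 := by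
    have hstar : star z = z := by funext u; simp
    have hMz : M *ᵥ z = A *ᵥ z - τ • z := by
      rw [hM, Matrix.sub_mulVec, Algebra.algebraMap_eq_smul_one,
        Matrix.smul_mulVec, Matrix.one_mulVec]
    rw [hstar, hMz, dotProduct_sub, dotProduct_smul]
    have h1 : z ⬝ᵥ (A *ᵥ z) = -c * ((k:ℝ) * α) - c * k * 0 := by
      unfold dotProduct
      have : ∀ u : V, z u * (A *ᵥ z) u = z u * d u - (z u) * (c * k) := by
        intro u; rw [hAz u]; ring
      simp only [this, Finset.sum_sub_distrib, ← Finset.sum_mul, hsum_z, hsum_zd]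
      ring
    have h2 : z ⬝ᵥ z = α - 2*c*α + n*c^2 := hsum_zsq
    rw [h1, h2]
    have hcn : c * n = α := by rw [hc]; field_simp
    have : n * ((-c * ((k:ℝ) * α) - c * k * 0) - τ • (α - 2*c*α + n*c^2)) = 0 := by
      rw [smul_eq_mul]
      calc n * ((-c * ((k:ℝ) * α) - c * k * 0) - τ * (α - 2*c*α + n*c^2))
          = -((c*n)*((k:ℝ)*α)) - τ*(n*α) + 2*τ*(c*n)*α - τ*(c*n)*(c*n) := by ring
        _ = -(α*((k:ℝ)*α)) - τ*(n*α) + 2*τ*α*α - τ*α*α := by rw [hcn]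
        _ = 0 := by linear_combination (-α) * hkey
    have := mul_eq_zero.mp this
    rcases this with h | h
    · exact absurd h hn0
    · exact h
  -- M is positive semidefinite
  have hAH : A.IsHermitian := by
    rw [Matrix.IsHermitian, Matrix.conjTranspose_eq_transpose_of_trivial, hA,
      SimpleGraph.transpose_adjMatrix]
  have hMH : M.IsHermitian := by
    rw [Matrix.IsHermitian, Matrix.conjTranspose_eq_transpose_of_trivial, hM,
      Matrix.transpose_sub, Algebra.algebraMap_eq_smul_one, Matrix.transpose_smul,
      Matrix.transpose_one]
    rw [Matrix.IsHermitian, Matrix.conjTranspose_eq_transpose_of_trivial] at hAH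
    rw [hAH]
  have hMpsd : M.PosSemidef := by
    simp only [hMH.posSemidef_iff_eigenvalues_nonneg, Pi.le_def, Pi.zero_apply]
    intro i
    have hmem := hMH.eigenvalues_mem_spectrum_real i
    have hspec : spectrum ℝ A - ({τ} : Set ℝ) = spectrum ℝ M := by
      rw [hM]; exact spectrum.sub_singleton_eq A τ
    rw [← hspec, Set.sub_singleton] at hmem
    obtain ⟨μ, hμ, hμe⟩ := hmem
    have := hτmin μ hμ
    simp only at hμe
    rw [← hμe]
    linarith
  have hzero : M *ᵥ z = 0 := (hMpsd.dotProduct_mulVec_zero_iff z).mp hQ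
  have hx0 : (M *ᵥ z) x = 0 := by rw [hzero]; rfl
  have hMz : M *ᵥ z = A *ᵥ z - τ • z := by
    rw [hM, Matrix.sub_mulVec, Algebra.algebraMap_eq_smul_one,
      Matrix.smul_mulVec, Matrix.one_mulVec]
  rw [hMz] at hx0
  have hzx : z x = -c := by simp [hz, hx]
  have : (d x - c * k) - τ * (-c) = 0 := by
    have := hx0
    rw [Pi.sub_apply, Pi.smul_apply, hAz x, hzx, smul_eq_mul] at this
    exact this
  have hdx : d x = c * ((k:ℝ) - τ) := by linarith
  have : d x = -τ := by
    rw [hdx, hc]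
    rw [div_mul_eq_mul_div, hkey]
    field_simp
  exact this
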